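/- Let φ₁, …, φ_p be DC functions on ℝ and let h be a continuous function on ℝ such that h(x) ∈ {φ₁(x), …, φ_p(x)} for every x ∈ ℝ. Then h is a DC function on ℝ. -/

import Mathlib

open Set

/-- A function on `ℝ` is DC if it is a difference of two convex functions. -/
def IsDC (f : ℝ → ℝ) : Prop :=
  ∃ c₁ c₂ : ℝ → ℝ, ConvexOn ℝ univ c₁ ∧ ConvexOn ℝ univ c₂ ∧ ∀ x, f x = c₁ x - c₂ x

/-- Chord inequality from convexity. -/
lemma chord_of_convexOn {f : ℝ → ℝ} (hf : ConvexOn ℝ univ f) {x y z : ℝ}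
    (hxy : x < y) (hyz : y < z) :
    (z - x) * f y ≤ (z - y) * f x + (y - x) * f z := by
  have hxz : x < z := hxy.trans hyz
  have h1 : (0:ℝ) < z - x := by linarith
  have key := hf.2 (mem_univ x) (mem_univ z)
    (show (0:ℝ) ≤ (z - y) / (z - x) from div_nonneg (by linarith) (by linarith))
    (show (0:ℝ) ≤ (y - x) / (z - x) from div_nonneg (by linarith) (by linarith))
    (show (z - y) / (z - x) + (y - x) / (z - x) = 1 by field_simp; ring)
  have hy : (z - y) / (z - x) * x + (y - x) / (z - x) * z = y := by
    field_simp; ring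
  rw [smul_eq_mul, smul_eq_mul, smul_eq_mul, smul_eq_mul, hy] at key
  have := mul_le_mul_of_nonneg_left key h1.le
  calc (z - x) * f y ≤ (z - x) * ((z - y) / (z - x) * f x + (y - x) / (z - x) * f z) := this
    _ = (z - y) * f x + (y - x) * f z := by field_simp

/-- Chord inequality implies convexity. -/
lemma convexOn_of_chord {f : ℝ → ℝ}
    (hc : ∀ x y z : ℝ, x < y → y < z → (z - x) * f y ≤ (z - y) * f x + (y - x) * f z) :
    ConvexOn ℝ univ f := by
  refine convexOn_of_slope_mono_adjacent convex_univ ?_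
  intro x y z _ _ hxy hyz
  have h1 : (0:ℝ) < y - x := by linarith
  have h2 : (0:ℝ) < z - y := by linarith
  have := hc x y z hxy hyz
  rw [div_le_div_iff₀ h1 h2]
  nlinarith

/-- Local chord condition plus continuity implies global convexity. -/
lemma convexOn_of_local_chord {f : ℝ → ℝ} (hf : Continuous f)
    (hloc : ∀ y : ℝ, ∃ δ > 0, ∀ x z : ℝ, y - δ < x → x < y → y < z → z < y + δ →
      (z - x) * f y ≤ (z - y) * f x + (y - x) * f z) :
    ConvexOn ℝ univ f := by
  apply convexOn_of_chord
  intro a t b hat htb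
  -- subtract the chord over [a, b]
  set d : ℝ := (f b - f a) / (b - a) with hd
  set g : ℝ → ℝ := fun w => f w - (f a + (w - a) * d) with hg
  have hab : a < b := hat.trans htb
  have hga : g a = 0 := by simp [hg]
  have hgb : g b = 0 := by
    have : (b - a) ≠ 0 := by linarith
    simp only [hg, hd]
    field_simp
    ring
  have hgc : Continuous g := by
    apply hf.sub; continuity
  -- it suffices to show g t ≤ 0
  suffices hgt : g t ≤ 0 by
    have hexp : g t = f t - (f a + (t - a) * d) := rfl
    have hne : (b - a) ≠ 0 := by linarith
    have : f t ≤ f a + (t - a) * d := by linarith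
    have h2 : (b - a) * f t ≤ (b - a) * (f a + (t - a) * d) :=
      mul_le_mul_of_nonneg_left this (by linarith)
    calc (b - a) * f t ≤ (b - a) * (f a + (t - a) * d) := h2
      _ = (b - t) * f a + (t - a) * f b := by
        have hbd : (b - a) * d = f b - f a := by rw [hd]; field_simp
        linear_combination (t - a) * hbd
  -- maximum principle
  by_contra hpos
  push_neg at hpos
  obtain ⟨y₀, hy₀mem, hy₀max⟩ :=
    (isCompact_Icc (a := a) (b := b)).exists_isMaxOn ⟨a, by constructor <;> linarith⟩
      (hgc.continuousOn)
  set M := g y₀ with hM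
  have hMpos : 0 < M := lt_of_lt_of_le hpos (hy₀max ⟨hat.le, htb.le⟩)
  -- the set of maximizers
  set T := {w : ℝ | w ∈ Icc a b ∧ g w = M} with hT
  have hTne : T.Nonempty := ⟨y₀, hy₀mem, rfl⟩
  have hTclosed : IsClosed T := by
    apply IsClosed.inter isClosed_Icc (isClosed_eq hgc continuous_const)
  have hTbdd : BddAbove T := ⟨b, fun w hw => hw.1.2⟩
  set y := sSup T with hy
  have hyT : y ∈ T := hTclosed.csSup_mem hTne hTbdd
  have hymem : y ∈ Icc a b := hyT.1
  have hgy : g y = M := hyT.2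
  have hya : a < y := by
    rcases lt_or_eq_of_le hymem.1 with h | h
    · exact h
    · exfalso; rw [← h] at hgy; rw [hga] at hgy; linarith
  have hyb : y < b := by
    rcases lt_or_eq_of_le hymem.2 with h | h
    · exact h
    · exfalso; rw [h] at hgy; rw [hgb] at hgy; linarith
  obtain ⟨δ, hδpos, hδ⟩ := hloc y
  -- pick x' ∈ (max a (y-δ), y), z' ∈ (y, min b (y+δ))
  obtain ⟨x', hx'1, hx'2⟩ := exists_between (show max a (y - δ) < y from max_lt hya (by linarith))
  obtain ⟨z', hz'1, hz'2⟩ := exists_between (show y < min b (y + δ) from lt_min hyb (by linarith))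
  have hx'a : a < x' := lt_of_le_of_lt (le_max_left _ _) hx'1
  have hx'δ : y - δ < x' := lt_of_le_of_lt (le_max_right _ _) hx'1
  have hz'b : z' < b := lt_of_lt_of_le hz'2 (min_le_left _ _)
  have hz'δ : z' < y + δ := lt_of_lt_of_le hz'2 (min_le_right _ _)
  have key := hδ x' z' hx'δ hx'2 hz'1 hz'δ
  -- transfer to g : affine part cancels
  have affine : (z' - x') * (f a + (y - a) * d) =
      (z' - y) * (f a + (x' - a) * d) + (y - x') * (f a + (z' - a) * d) := by ring
  have keyg : (z' - x') * g y ≤ (z' - y) * g x' + (y - x') * g z' := by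
    simp only [hg]
    nlinarith [key]
  have hgx' : g x' ≤ M := hy₀max ⟨hx'a.le, by linarith⟩
  have hgz'le : g z' ≤ M := hy₀max ⟨by linarith, hz'b.le⟩
  have hgz' : g z' < M := by
    rcases lt_or_eq_of_le hgz'le with h | h
    · exact h
    · exfalso
      have : z' ∈ T := ⟨⟨by linarith, hz'b.le⟩, h⟩
      have := le_csSup hTbdd this
      linarith
  rw [hgy] at keyg
  nlinarith [keyg, hgx', hgz', hx'2, hz'1]

/-- If `H` is a continuous selection of finitely many convex functions, then
`H + ∑ pairs (i,j), max (F i) (F j)` is convex. -/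
lemma selection_add_pairs_convex {p : ℕ} {F : Fin p → ℝ → ℝ}
    (hF : ∀ i, ConvexOn ℝ univ (F i)) (hFc : ∀ i, Continuous (F i))
    {H : ℝ → ℝ} (hH : Continuous H) (hsel : ∀ x, ∃ i, H x = F i x) :
    ConvexOn ℝ univ
      (fun x => H x + ∑ q : Fin p × Fin p, max (F q.1 x) (F q.2 x)) := by
  have hmaxconv : ∀ q : Fin p × Fin p, ConvexOn ℝ univ (fun x => max (F q.1 x) (F q.2 x)) :=
    fun q => (hF q.1).sup (hF q.2)
  apply convexOn_of_local_chord
  · exact hH.add (continuous_finset_sum _ fun q _ => (hFc q.1).max (hFc q.2))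
  intro y
  -- choose δ so that selectors near y are exact at y
  have hevent : ∀ᶠ w in nhds y, ∀ k : Fin p, F k y ≠ H y → F k w ≠ H w := by
    rw [Filter.eventually_all]
    intro k
    by_cases hk : F k y = H y
    · filter_upwards with w hw; exact absurd hk hw
    · have hc : ContinuousAt (fun w => F k w - H w) y := ((hFc k).sub hH).continuousAt
      have hne : F k y - H y ≠ 0 := sub_ne_zero.2 hk
      filter_upwards [hc.eventually_ne hne] with w hw _
      exact fun he => hw (by rw [he, sub_self])
  rw [Metric.eventually_nhds_iff] at hevent
  obtain ⟨δ, hδpos, hδ⟩ := hevent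
  refine ⟨δ, hδpos, ?_⟩
  intro x z hx1 hx2 hz1 hz2
  obtain ⟨i, hi⟩ := hsel x
  obtain ⟨j, hj⟩ := hsel z
  have hdx : dist x y < δ := by rw [Real.dist_eq]; rw [abs_lt]; constructor <;> linarith
  have hdz : dist z y < δ := by rw [Real.dist_eq]; rw [abs_lt]; constructor <;> linarith
  have hiy : F i y = H y := by
    by_contra hne
    exact (hδ hdx i hne) hi.symm
  have hjy : F j y = H y := by
    by_contra hne
    exact (hδ hdz j hne) hj.symm
  set q₀ : Fin p × Fin p := (i, j) with hq₀
  -- the special term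
  have main : (z - x) * (H y + max (F i y) (F j y)) ≤
      (z - y) * (H x + max (F i x) (F j x)) + (y - x) * (H z + max (F i z) (F j z)) := by
    have hmaxy : max (F i y) (F j y) = H y := by rw [hiy, hjy, max_self]
    have ci := chord_of_convexOn (hF i) hx2 hz1
    have cj := chord_of_convexOn (hF j) hx2 hz1
    have h1 : F j x ≤ max (F i x) (F j x) := le_max_right _ _
    have h2 : F i z ≤ max (F i z) (F j z) := le_max_left _ _
    rw [hmaxy, hi, hj]
    nlinarith [ci, cj, mul_le_mul_of_nonneg_left h1 (show (0:ℝ) ≤ z - y by linarith),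
      mul_le_mul_of_nonneg_left h2 (show (0:ℝ) ≤ y - x by linarith)]
  -- other terms: plain convexity
  have rest : ∀ q ∈ Finset.univ.erase q₀,
      (z - x) * max (F q.1 y) (F q.2 y) ≤
      (z - y) * max (F q.1 x) (F q.2 x) + (y - x) * max (F q.1 z) (F q.2 z) :=
    fun q _ => chord_of_convexOn (hmaxconv q) hx2 hz1
  have hsum := Finset.sum_le_sum rest
  have split : ∀ w : ℝ, (∑ q : Fin p × Fin p, max (F q.1 w) (F q.2 w)) =
      (∑ q ∈ Finset.univ.erase q₀, max (F q.1 w) (F q.2 w)) + max (F i w) (F j w) := by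
    intro w
    rw [Finset.sum_erase_add _ _ (Finset.mem_univ q₀)]
  simp only [split]
  rw [Finset.sum_add_distrib, ← Finset.mul_sum, ← Finset.mul_sum, ← Finset.mul_sum] at hsum
  nlinarith [main, hsum]

lemma convexOn_finset_sum {ι : Type*} (s : Finset ι) (f : ι → ℝ → ℝ)
    (hf : ∀ i ∈ s, ConvexOn ℝ univ (f i)) :
    ConvexOn ℝ univ (fun x => ∑ i ∈ s, f i x) := by
  classical
  induction s using Finset.induction_on with
  | empty => simpa using convexOn_const (0:ℝ) convex_univ
  | insert a s' hnotmem ih =>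
    simp only [Finset.sum_insert hnotmem]
    exact (hf a (Finset.mem_insert_self a s')).add
      (ih fun i hi => hf i (Finset.mem_insert_of_mem hi))

lemma continuous_of_convexOn_univ {f : ℝ → ℝ} (hf : ConvexOn ℝ univ f) : Continuous f := by
  rw [← continuousOn_univ]
  exact hf.continuousOn isOpen_univ

/-- Mixing lemma: if `h` is continuous on `ℝ` and at each point `h(x)` coincides with one
of finitely many DC functions `φ₁(x), …, φ_p(x)`, then `h` is DC. -/
theorem isDC_of_continuous_of_mem_finite_family (p : ℕ) (φ : Fin p → ℝ → ℝ)
    (hφ : ∀ i, IsDC (φ i)) (h : ℝ → ℝ) (hcont : Continuous h)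
    (hmem : ∀ x : ℝ, ∃ i : Fin p, h x = φ i x) : IsDC h := by
  classical
  choose g c hg hc hrep using hφ
  set Csum : ℝ → ℝ := fun x => ∑ j : Fin p, c j x with hCsum
  have hCconv : ConvexOn ℝ univ Csum := convexOn_finset_sum _ _ (fun j _ => hc j)
  have hCcont : Continuous Csum := continuous_of_convexOn_univ hCconv
  set F : Fin p → ℝ → ℝ := fun i x => φ i x + Csum x with hF
  have hFconv : ∀ i, ConvexOn ℝ univ (F i) := by
    intro i
    have heq : F i = fun x => g i x + ∑ j ∈ Finset.univ.erase i, c j x := by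
      funext x
      simp only [hF, hCsum, hrep i x]
      rw [← Finset.sum_erase_add _ _ (Finset.mem_univ i)]
      ring
    rw [heq]
    exact (hg i).add (convexOn_finset_sum _ _ (fun j _ => hc j))
  have hFcont : ∀ i, Continuous (F i) := fun i => continuous_of_convexOn_univ (hFconv i)
  set H : ℝ → ℝ := fun x => h x + Csum x with hH
  have hHcont : Continuous H := hcont.add hCcont
  have hsel : ∀ x, ∃ i, H x = F i x := by
    intro x
    obtain ⟨i, hi⟩ := hmem x
    exact ⟨i, by simp only [hH, hF, hi]⟩
  have hA := selection_add_pairs_convex hFconv hFcont hHcont hsel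
  refine ⟨fun x => H x + ∑ q : Fin p × Fin p, max (F q.1 x) (F q.2 x),
    fun x => Csum x + ∑ q : Fin p × Fin p, max (F q.1 x) (F q.2 x), hA, ?_, ?_⟩
  · exact hCconv.add (convexOn_finset_sum _ _ (fun q _ => (hFconv q.1).sup (hFconv q.2)))
  · intro x
    simp only [hH]
    ring
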